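/- arXiv:2009.08707 — 5 statements merged into one kernel-verified Lean document; each statement's English description precedes it below -/
import Mathlib

section
/- Let Σ be a 2-connected non-geodetic signed graph, and let u, v be an incompatible pair of vertices at minimum distance among all incompatible pairs in Σ. Then there exist two internally disjoint shortest paths from u to v of opposite signs. -/
open SimpleGraph

/-- The sign of a walk: the product of the signs of its edges. -/
def walkSign {V : Type*} {G : SimpleGraph V} (σ : V → V → ℤ) :
    {u v : V} → G.Walk u v → ℤ
  | _, _, SimpleGraph.Walk.nil => 1
  | _, _, @SimpleGraph.Walk.cons _ _ a b _ _ p => σ a b * walkSign σ p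

/-- A walk is a shortest path if its length equals the distance of its endpoints. -/
def IsShortest {V : Type*} {G : SimpleGraph V} {u v : V} (p : G.Walk u v) : Prop :=
  p.length = G.dist u v

/-- Two vertices are compatible if all shortest paths between them have the same sign. -/
def PairCompatible {V : Type*} (G : SimpleGraph V) (σ : V → V → ℤ) (u v : V) : Prop :=
  ∀ p q : G.Walk u v, IsShortest p → IsShortest q → walkSign σ p = walkSign σ q

/-- A graph is 2-connected: connected, and still connected after deleting any vertex. -/
def TwoConnected {V : Type*} (G : SimpleGraph V) : Prop :=
  G.Connected ∧ ∀ v : V, (G.induce {u : V | u ≠ v}).Connected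

/-- A graph is geodetic if between any two vertices there is a unique shortest path. -/
def Geodetic {V : Type*} (G : SimpleGraph V) : Prop :=
  ∀ (u v : V) (p q : G.Walk u v), IsShortest p → IsShortest q → p = q

/-- The internal vertices of a walk. -/
def walkInterior {V : Type*} {G : SimpleGraph V} {u v : V} (p : G.Walk u v) : List V :=
  p.support.tail.dropLast

lemma walkSign_append {V : Type*} {G : SimpleGraph V} (σ : V → V → ℤ) {u v w : V}
    (p : G.Walk u v) (q : G.Walk v w) :
    walkSign σ (p.append q) = walkSign σ p * walkSign σ q := by
  induction p with
  | nil => simp [walkSign]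
  | cons h p ih => simp [walkSign, ih, mul_assoc]

lemma walkSign_unit {V : Type*} {G : SimpleGraph V} {σ : V → V → ℤ}
    (hσ : ∀ u v : V, G.Adj u v → σ u v = 1 ∨ σ u v = -1) {u v : V} (p : G.Walk u v) :
    walkSign σ p = 1 ∨ walkSign σ p = -1 := by
  induction p with
  | nil => left; rfl
  | cons h p ih =>
      rcases hσ _ _ h with h1 | h1 <;> rcases ih with h2 | h2 <;>
        simp [walkSign, h1, h2]

lemma walk_mem_interior {V : Type*} {G : SimpleGraph V} {u v w : V} {p : G.Walk u v}
    (hp : p.IsPath) (hne : u ≠ v) (hw : w ∈ p.support.tail.dropLast) :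
    w ∈ p.support ∧ w ≠ u ∧ w ≠ v := by
  have htail : w ∈ p.support.tail := List.dropLast_subset _ hw
  have hsupp : w ∈ p.support := by
    rw [p.support_eq_cons]; exact List.mem_cons_of_mem _ htail
  have hnodup : p.support.Nodup := hp.support_nodup
  have hcons := p.support_eq_cons
  have hnodup' : (u :: p.support.tail).Nodup := hcons ▸ hnodup
  have hwu : w ≠ u := by
    rintro rfl
    exact (List.nodup_cons.mp hnodup').1 htail
  have htne : p.support.tail ≠ [] := by
    intro h
    apply hne
    apply SimpleGraph.Walk.eq_of_length_eq_zero (p := p)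
    have h1 : p.support.length = p.length + 1 := p.length_support
    rw [hcons, h] at h1
    simpa using h1.symm
  have hlast : p.support.tail.getLast htne = v := by
    rw [List.getLast_tail]
    exact p.getLast_support
  have hwv : w ≠ v := by
    rintro rfl
    have := List.dropLast_append_getLast htne
    rw [hlast] at this
    have hnd : (p.support.tail.dropLast ++ [w]).Nodup := by
      rw [this]; exact (List.nodup_cons.mp hnodup').2
    rw [List.nodup_append] at hnd
    exact hnd.2.2 w hw w (by simp) rfl
  exact ⟨hsupp, hwu, hwv⟩

lemma split_shortest {V : Type*} [DecidableEq V] {G : SimpleGraph V} (hconn : G.Connected) {u v w : V}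
    (p : G.Walk u v) (hp : p.length = G.dist u v) (hw : w ∈ p.support) :
    (p.takeUntil w hw).length = G.dist u w ∧ (p.dropUntil w hw).length = G.dist w v := by
  have hsum : (p.takeUntil w hw).length + (p.dropUntil w hw).length = p.length := by
    have := congrArg Walk.length (p.take_spec hw)
    rwa [Walk.length_append] at this
  have h1 : G.dist u w ≤ (p.takeUntil w hw).length := SimpleGraph.dist_le _
  have h2 : G.dist w v ≤ (p.dropUntil w hw).length := SimpleGraph.dist_le _
  obtain ⟨r, hr⟩ := hconn.exists_walk_length_eq_dist u w
  obtain ⟨s, hs⟩ := hconn.exists_walk_length_eq_dist w v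
  have h3 : G.dist u v ≤ G.dist u w + (p.dropUntil w hw).length := by
    simpa [Walk.length_append, hr] using SimpleGraph.dist_le (r.append (p.dropUntil w hw))
  have h4 : G.dist u v ≤ (p.takeUntil w hw).length + G.dist w v := by
    simpa [Walk.length_append, hs] using SimpleGraph.dist_le ((p.takeUntil w hw).append s)
  omega

/-- Let `u` and `v` be an incompatible pair of vertices with least distance in a
2-connected non-geodetic signed graph.  Then there are two internally disjoint
shortest paths from `u` to `v` of opposite signs. -/
theorem incompatible_pair_internally_disjoint {V : Type*} (G : SimpleGraph V)
    (σ : V → V → ℤ)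
    (hσ : ∀ u v : V, G.Adj u v → σ u v = 1 ∨ σ u v = -1)
    (hsymm : ∀ u v : V, σ u v = σ v u)
    (h2c : TwoConnected G) (hng : ¬ Geodetic G)
    {u v : V} (huv : ¬ PairCompatible G σ u v)
    (hmin : ∀ x y : V, ¬ PairCompatible G σ x y → G.dist u v ≤ G.dist x y) :
    ∃ (p q : G.Walk u v), p.IsPath ∧ q.IsPath ∧ IsShortest p ∧ IsShortest q ∧
      walkSign σ p = - walkSign σ q ∧ List.Disjoint (walkInterior p) (walkInterior q) := by
  classical
  rw [PairCompatible] at huv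
  push_neg at huv
  obtain ⟨p, q, hp, hq, hpq⟩ := huv
  have hconn := h2c.1
  have hp' : p.length = G.dist u v := hp
  have hq' : q.length = G.dist u v := hq
  have hne : u ≠ v := by
    rintro rfl
    rw [SimpleGraph.dist_self] at hp' hq'
    apply hpq
    cases p with
    | nil =>
      cases q with
      | nil => rfl
      | cons h r => simp at hq'
    | cons h r => simp at hp'
  have hpp : p.IsPath := p.isPath_of_length_eq_dist hp'
  have hqp : q.IsPath := q.isPath_of_length_eq_dist hq'
  have hps := walkSign_unit hσ p
  have hqs := walkSign_unit hσ q
  have hopp : walkSign σ p = - walkSign σ q := by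
    rcases hps with h1 | h1 <;> rcases hqs with h2 | h2 <;> rw [h1, h2] at hpq ⊢ <;> omega
  refine ⟨p, q, hpp, hqp, hp, hq, hopp, ?_⟩
  intro w hwp hwq
  obtain ⟨hwsp, hwu, hwv⟩ := walk_mem_interior hpp hne hwp
  obtain ⟨hwsq, _, _⟩ := walk_mem_interior hqp hne hwq
  obtain ⟨hpt, hpd⟩ := split_shortest hconn p hp' hwsp
  obtain ⟨hqt, hqd⟩ := split_shortest hconn q hq' hwsq
  have hsump : G.dist u w + G.dist w v = G.dist u v := by
    have h := congrArg Walk.length (p.take_spec hwsp)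
    rw [Walk.length_append, hpt, hpd] at h
    omega
  have hdv : 0 < G.dist w v := by
    rcases Nat.eq_zero_or_pos (G.dist w v) with h | h
    · exact absurd (Walk.eq_of_length_eq_zero (hpd.trans h)) hwv
    · exact h
  have hdu : 0 < G.dist u w := by
    rcases Nat.eq_zero_or_pos (G.dist u w) with h | h
    · exact absurd (Walk.eq_of_length_eq_zero (hpt.trans h)).symm hwu
    · exact h
  have hc1 : PairCompatible G σ u w := by
    by_contra h
    have := hmin u w h
    omega
  have hc2 : PairCompatible G σ w v := by
    by_contra h
    have := hmin w v h
    omega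
  have e1 : walkSign σ (p.takeUntil w hwsp) = walkSign σ (q.takeUntil w hwsq) :=
    hc1 _ _ hpt hqt
  have e2 : walkSign σ (p.dropUntil w hwsp) = walkSign σ (q.dropUntil w hwsq) :=
    hc2 _ _ hpd hqd
  apply hpq
  rw [← p.take_spec hwsp, ← q.take_spec hwsq, walkSign_append, walkSign_append, e1, e2]
end

section
/- If an incompatible pair of vertices exists in a 2-connected non-geodetic signed graph, then a pair (u,v) of incompatible vertices at minimum distance k lies on a negative cycle of length 2k formed by the union of two internally disjoint shortest u–v paths of opposite signs. -/
open SimpleGraph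

lemma walkSign_reverse {V : Type*} {G : SimpleGraph V} {σ : V → V → ℤ}
    (hsymm : ∀ u v : V, σ u v = σ v u) {u v : V} (p : G.Walk u v) :
    walkSign σ p.reverse = walkSign σ p := by
  induction p with
  | nil => rfl
  | cons h p ih =>
      rw [SimpleGraph.Walk.reverse_cons, walkSign_append, ih]
      simp [walkSign, hsymm _ _, mul_comm]

lemma shortest_split {V : Type*} {G : SimpleGraph V} [DecidableEq V] (hc : G.Connected)
    {u v w : V} (p : G.Walk u v) (hp : IsShortest p) (hw : w ∈ p.support) :
    IsShortest (p.takeUntil w hw) ∧ IsShortest (p.dropUntil w hw) := by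
  have hspec := p.take_spec hw
  have hlen : (p.takeUntil w hw).length + (p.dropUntil w hw).length = p.length := by
    rw [← SimpleGraph.Walk.length_append, hspec]
  have h1 : G.dist u w ≤ (p.takeUntil w hw).length := SimpleGraph.dist_le _
  have h2 : G.dist w v ≤ (p.dropUntil w hw).length := SimpleGraph.dist_le _
  have h3 : G.dist u v ≤ G.dist u w + G.dist w v := hc.dist_triangle
  unfold IsShortest at hp ⊢
  omega

/-- In a 2-connected non-geodetic signed graph, an incompatible pair `(u,v)` at minimum
distance `k` lies on a negative cycle of length `2k` formed by the union of two
internally disjoint shortest `u`–`v` paths of opposite signs. -/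
theorem incompatible_pair_on_negative_cycle {V : Type*} (G : SimpleGraph V)
    (σ : V → V → ℤ)
    (hσ : ∀ u v : V, G.Adj u v → σ u v = 1 ∨ σ u v = -1)
    (hsymm : ∀ u v : V, σ u v = σ v u)
    (h2c : TwoConnected G) (hng : ¬ Geodetic G)
    {u v : V} {k : ℕ} (hk : G.dist u v = k)
    (huv : ¬ PairCompatible G σ u v)
    (hmin : ∀ x y : V, ¬ PairCompatible G σ x y → G.dist u v ≤ G.dist x y) :
    ∃ (p q : G.Walk u v), IsShortest p ∧ IsShortest q ∧
      walkSign σ p = - walkSign σ q ∧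
      (p.append q.reverse).IsCycle ∧
      (p.append q.reverse).length = 2 * k ∧
      walkSign σ (p.append q.reverse) = -1 := by
  classical
  have hc : G.Connected := h2c.1
  unfold PairCompatible at huv
  push_neg at huv
  obtain ⟨p, q, hp, hq, hne⟩ := huv
  -- the two signs are opposite
  have hpq : walkSign σ p = - walkSign σ q := by
    rcases walkSign_unit hσ p with h1 | h1 <;> rcases walkSign_unit hσ q with h2 | h2 <;>
      simp_all
  -- lengths
  have hplen : p.length = k := by rw [hp, hk]
  have hqlen : q.length = k := by rw [hq, hk]
  -- k ≥ 2
  have hk2 : 2 ≤ k := by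
    by_contra hlt
    push_neg at hlt
    interval_cases k
    · cases p with
      | nil =>
          cases q with
          | nil => exact hne rfl
          | cons h q => simp at hqlen
      | cons h p => simp at hplen
    · cases p with
      | nil => simp at hplen
      | cons hadj p =>
          cases p with
          | nil =>
              cases q with
              | nil => simp at hqlen
              | cons hadj' q =>
                  cases q with
                  | nil => exact hne rfl
                  | cons h2 q => simp at hqlen
          | cons h2 p => simp at hplen
  have huvne : u ≠ v := by
    intro h
    subst h
    rw [SimpleGraph.dist_self] at hk
    omega
  have hpp : p.IsPath := p.isPath_of_length_eq_dist hp
  have hqp : q.IsPath := q.isPath_of_length_eq_dist hq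
  -- internal disjointness
  have hdisj : ∀ w : V, w ∈ p.support → w ∈ q.support → w = u ∨ w = v := by
    intro w hwp hwq
    by_contra hcon
    push_neg at hcon
    obtain ⟨hwu, hwv⟩ := hcon
    obtain ⟨hps1, hps2⟩ := shortest_split hc p hp hwp
    obtain ⟨hqs1, hqs2⟩ := shortest_split hc q hq hwq
    have hd1 : 0 < G.dist u w := hc.pos_dist_of_ne (Ne.symm hwu)
    have hd2 : 0 < G.dist w v := hc.pos_dist_of_ne hwv
    have hsum : G.dist u w + G.dist w v = k := by
      have := p.take_spec hwp
      have hlen : (p.takeUntil w hwp).length + (p.dropUntil w hwp).length = p.length := by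
        rw [← SimpleGraph.Walk.length_append, this]
      unfold IsShortest at hps1 hps2
      omega
    have c1 : PairCompatible G σ u w := by
      by_contra hcc
      have := hmin u w hcc
      omega
    have c2 : PairCompatible G σ w v := by
      by_contra hcc
      have := hmin w v hcc
      omega
    have e1 := c1 (p.takeUntil w hwp) (q.takeUntil w hwq) hps1 hqs1
    have e2 := c2 (p.dropUntil w hwp) (q.dropUntil w hwq) hps2 hqs2
    apply hne
    rw [← p.take_spec hwp, ← q.take_spec hwq, walkSign_append, walkSign_append, e1, e2]
  refine ⟨p, q, hp, hq, hpq, ?_, ?_, ?_⟩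
  · -- IsCycle
    have hqrp : q.reverse.IsPath := hqp.reverse
    -- edges disjoint
    have hednd : (p.append q.reverse).edges.Nodup := by
      rw [SimpleGraph.Walk.edges_append, SimpleGraph.Walk.edges_reverse]
      rw [List.nodup_append]
      refine ⟨hpp.isTrail.edges_nodup, (List.nodup_reverse).2 hqp.isTrail.edges_nodup, ?_⟩
      intro e hep e' heq' hee'
      subst hee'
      have heq : e ∈ q.edges := List.mem_reverse.mp heq'
      induction e using Sym2.ind with
      | _ a b =>
        have hadj : G.Adj a b := SimpleGraph.Walk.adj_of_mem_edges p hep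
        have hap : a ∈ p.support := p.fst_mem_support_of_mem_edges hep
        have hbp : b ∈ p.support := p.snd_mem_support_of_mem_edges hep
        have haq : a ∈ q.support := q.fst_mem_support_of_mem_edges heq
        have hbq : b ∈ q.support := q.snd_mem_support_of_mem_edges heq
        have ha := hdisj a hap haq
        have hb := hdisj b hbp hbq
        have hadjuv : G.Adj u v := by
          rcases ha with ha | ha <;> rcases hb with hb | hb <;> subst ha <;> subst hb
          · exact absurd rfl hadj.ne
          · exact hadj
          · exact hadj.symm
          · exact absurd rfl hadj.ne
        have : G.dist u v = 1 := SimpleGraph.dist_eq_one_iff_adj.mpr hadjuv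
        omega
    have hnenil : p.append q.reverse ≠ SimpleGraph.Walk.nil := by
      intro h
      have : (p.append q.reverse).length = 0 := by rw [h]; rfl
      rw [SimpleGraph.Walk.length_append, SimpleGraph.Walk.length_reverse] at this
      omega
    have htail : (p.append q.reverse).support.tail.Nodup := by
      have hsupp : (p.append q.reverse).support = p.support ++ q.reverse.support.tail :=
        SimpleGraph.Walk.support_append p q.reverse
      have hptail : (p.append q.reverse).support.tail
          = p.support.tail ++ q.reverse.support.tail := by
        rw [hsupp, p.support_eq_cons]
        rfl
      rw [hptail, List.nodup_append]
      refine ⟨?_, ?_, ?_⟩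
      · have := hpp.support_nodup
        rw [p.support_eq_cons] at this
        exact this.of_cons
      · have := hqrp.support_nodup
        rw [q.reverse.support_eq_cons] at this
        exact this.of_cons
      · intro x hx1 y hx2 hxy
        subst hxy
        have hxp : x ∈ p.support := List.mem_of_mem_tail hx1
        have hxq : x ∈ q.support := by
          have : x ∈ q.reverse.support := List.mem_of_mem_tail hx2
          rwa [SimpleGraph.Walk.support_reverse, List.mem_reverse] at this
        have hxu : x ≠ u := by
          intro h
          subst h
          have := hpp.support_nodup
          rw [p.support_eq_cons] at this
          exact (List.nodup_cons.mp this).1 hx1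
        have hxv : x ≠ v := by
          intro h
          subst h
          have := hqrp.support_nodup
          rw [q.reverse.support_eq_cons] at this
          exact (List.nodup_cons.mp this).1 hx2
        rcases hdisj x hxp hxq with h | h
        · exact hxu h
        · exact hxv h
    exact ⟨⟨⟨hednd⟩, hnenil⟩, htail⟩
  · rw [SimpleGraph.Walk.length_append, SimpleGraph.Walk.length_reverse, hplen, hqlen]
    omega
  · rw [walkSign_append, walkSign_reverse hsymm, hpq]
    rcases walkSign_unit hσ q with h | h <;> rw [h] <;> ring
end

section
/- If Σ₂ contains a positive edge and a negative edge sharing a vertex, and Σ₁ contains at least one edge, then the lexicographic product Σ₁[Σ₂] is incompatible: specifically, for vertices v₁,v₂,v₃ in Σ₂ with σ₂(v₁v₂) = +1 and σ₂(v₂v₃) = −1 and v₁ ≁ v₃, and an edge u₁u₂ in Σ₁, the vertices (u₁,v₁) and (u₁,v₃) admit two shortest paths of length 2 with opposite signs. -/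
open SimpleGraph

/-- A signed graph is compatible if all shortest paths between any two vertices have
the same sign. -/
def Compatible {V : Type*} (G : SimpleGraph V) (σ : V → V → ℤ) : Prop :=
  ∀ (u v : V) (p q : G.Walk u v), IsShortest p → IsShortest q →
    walkSign σ p = walkSign σ q

/-- The lexicographic product of two graphs: `(a,b) ~ (c,d)` iff `a ~ c`,
or `a = c` and `b ~ d`. -/
def lexProd {V₁ V₂ : Type*} (G₁ : SimpleGraph V₁) (G₂ : SimpleGraph V₂) :
    SimpleGraph (V₁ × V₂) where
  Adj x y := G₁.Adj x.1 y.1 ∨ (x.1 = y.1 ∧ G₂.Adj x.2 y.2)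
  symm := by
    refine ⟨?_⟩
    rintro x y (h | ⟨h, h2⟩)
    · exact Or.inl h.symm
    · exact Or.inr ⟨h.symm, h2.symm⟩
  loopless := by
    refine ⟨?_⟩
    rintro x (h | ⟨_, h2⟩)
    · exact G₁.loopless.irrefl _ h
    · exact G₂.loopless.irrefl _ h2

/-- The signature of the lexicographic product of signed graphs. -/
def lexSign {V₁ V₂ : Type*} [DecidableEq V₁] (σ₁ : V₁ → V₁ → ℤ) (σ₂ : V₂ → V₂ → ℤ) :
    V₁ × V₂ → V₁ × V₂ → ℤ :=
  fun x y => if x.1 = y.1 then σ₂ x.2 y.2 else σ₁ x.1 y.1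

/-- If `Σ₂` contains a positive edge `v₁v₂` and a negative edge `v₂v₃` with `v₁ ≁ v₃`,
and `Σ₁` has an edge `u₁u₂`, then `(u₁,v₁)` and `(u₁,v₃)` admit two shortest paths of
length `2` of opposite signs in `Σ₁[Σ₂]`; in particular the product is incompatible. -/
theorem lexProd_incompatible {V₁ V₂ : Type*} [DecidableEq V₁]
    (G₁ : SimpleGraph V₁) (G₂ : SimpleGraph V₂)
    (σ₁ : V₁ → V₁ → ℤ) (σ₂ : V₂ → V₂ → ℤ)
    (hσ₁ : ∀ u v : V₁, G₁.Adj u v → σ₁ u v = 1 ∨ σ₁ u v = -1)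
    (hσ₂ : ∀ u v : V₂, G₂.Adj u v → σ₂ u v = 1 ∨ σ₂ u v = -1)
    (hsymm₁ : ∀ u v : V₁, σ₁ u v = σ₁ v u) (hsymm₂ : ∀ u v : V₂, σ₂ u v = σ₂ v u)
    (u₁ u₂ : V₁) (hu : G₁.Adj u₁ u₂)
    (v₁ v₂ v₃ : V₂) (h12 : G₂.Adj v₁ v₂) (h23 : G₂.Adj v₂ v₃) (h13 : ¬ G₂.Adj v₁ v₃)
    (hpos : σ₂ v₁ v₂ = 1) (hneg : σ₂ v₂ v₃ = -1) :
    ∃ P₁ P₂ : (lexProd G₁ G₂).Walk (u₁, v₁) (u₁, v₃),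
      IsShortest P₁ ∧ IsShortest P₂ ∧ P₁.length = 2 ∧ P₂.length = 2 ∧
      walkSign (lexSign σ₁ σ₂) P₁ = - walkSign (lexSign σ₁ σ₂) P₂ ∧
      ¬ Compatible (lexProd G₁ G₂) (lexSign σ₁ σ₂) := by
  set G := lexProd G₁ G₂
  have hne₁₃ : v₁ ≠ v₃ := by
    rintro rfl
    have := hsymm₂ v₂ v₁
    rw [hneg, hpos] at this; norm_num at this
  have a1 : G.Adj (u₁, v₁) (u₁, v₂) := Or.inr ⟨rfl, h12⟩
  have a2 : G.Adj (u₁, v₂) (u₁, v₃) := Or.inr ⟨rfl, h23⟩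
  have b1 : G.Adj (u₁, v₁) (u₂, v₁) := Or.inl hu
  have b2 : G.Adj (u₂, v₁) (u₁, v₃) := Or.inl hu.symm
  let P₁ : G.Walk (u₁, v₁) (u₁, v₃) := .cons a1 (.cons a2 .nil)
  let P₂ : G.Walk (u₁, v₁) (u₁, v₃) := .cons b1 (.cons b2 .nil)
  have hnadj : ¬ G.Adj (u₁, v₁) (u₁, v₃) := by
    rintro (h | ⟨_, h⟩)
    · exact G₁.loopless.irrefl _ h
    · exact h13 h
  have hne : ((u₁, v₁) : V₁ × V₂) ≠ (u₁, v₃) := by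
    simp [hne₁₃]
  have hdist : G.dist (u₁, v₁) (u₁, v₃) = 2 := by
    have hle : G.dist (u₁, v₁) (u₁, v₃) ≤ 2 := by
      have := SimpleGraph.dist_le P₁; simpa [P₁] using this
    have h0 : G.dist (u₁, v₁) (u₁, v₃) ≠ 0 := by
      intro h
      rcases SimpleGraph.dist_eq_zero_iff_eq_or_not_reachable.mp h with h | h
      · exact hne h
      · exact h ⟨P₁⟩
    have h1 : G.dist (u₁, v₁) (u₁, v₃) ≠ 1 := by
      intro h
      exact hnadj (SimpleGraph.dist_eq_one_iff_adj.mp h)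
    omega
  have hsu : u₁ ≠ u₂ := hu.ne
  have hs1 : walkSign (lexSign σ₁ σ₂) P₁ = -1 := by
    simp [P₁, walkSign, lexSign, hpos, hneg]
  have hs2 : walkSign (lexSign σ₁ σ₂) P₂ = 1 := by
    have : walkSign (lexSign σ₁ σ₂) P₂ = σ₁ u₁ u₂ * σ₁ u₁ u₂ := by
      show (if u₁ = u₂ then σ₂ v₁ v₁ else σ₁ u₁ u₂) *
        ((if u₂ = u₁ then σ₂ v₁ v₃ else σ₁ u₂ u₁) * 1) = σ₁ u₁ u₂ * σ₁ u₁ u₂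
      rw [if_neg hsu, if_neg (Ne.symm hsu), ← hsymm₁ u₁ u₂]; ring
    rw [this]
    rcases hσ₁ u₁ u₂ hu with h | h <;> rw [h] <;> norm_num
  have hsp₁ : IsShortest P₁ := by simp [IsShortest, hdist, P₁]
  have hsp₂ : IsShortest P₂ := by simp [IsShortest, hdist, P₂]
  refine ⟨P₁, P₂, hsp₁, hsp₂, rfl, rfl, by rw [hs1, hs2], fun hc => ?_⟩
  have := hc _ _ P₁ P₂ hsp₁ hsp₂
  rw [hs1, hs2] at this; norm_num at this
end

section
/- For connected signed graphs Σ₁ and Σ₂ whose tensor product is connected: if Σ₁ ⊗ Σ₂ is compatible then both Σ₁ and Σ₂ are compatible. -/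
open SimpleGraph

/-- The tensor (categorical) product of two graphs. -/
def tensorProd {V₁ V₂ : Type*} (G₁ : SimpleGraph V₁) (G₂ : SimpleGraph V₂) :
    SimpleGraph (V₁ × V₂) where
  Adj x y := G₁.Adj x.1 y.1 ∧ G₂.Adj x.2 y.2
  symm := ⟨fun x y h => ⟨h.1.symm, h.2.symm⟩⟩
  loopless := ⟨fun x h => G₁.loopless.irrefl _ h.1⟩

/-- The signature of the tensor product of signed graphs: the product of the signs of
the projected edges. -/
def tensorSign {V₁ V₂ : Type*} (σ₁ : V₁ → V₁ → ℤ) (σ₂ : V₂ → V₂ → ℤ) :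
    V₁ × V₂ → V₁ × V₂ → ℤ :=
  fun x y => σ₁ x.1 y.1 * σ₂ x.2 y.2


section Aux
variable {V₁ V₂ : Type*} {G₁ : SimpleGraph V₁} {G₂ : SimpleGraph V₂}

def fstHom : tensorProd G₁ G₂ →g G₁ := ⟨Prod.fst, fun h => h.1⟩
def sndHom : tensorProd G₁ G₂ →g G₂ := ⟨Prod.snd, fun h => h.2⟩

def zipWalk : ∀ {u v : V₁} {a b : V₂} (p : G₁.Walk u v) (r : G₂.Walk a b),
    p.length = r.length → (tensorProd G₁ G₂).Walk (u, a) (v, b)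
  | _, _, _, _, .nil, .nil, _ => .nil
  | _, _, _, _, .cons h p, .cons h' r, hl =>
      .cons ⟨h, h'⟩ (zipWalk p r (by simpa using hl))
  | _, _, _, _, .nil, .cons _ _, hl => absurd hl (by simp)
  | _, _, _, _, .cons _ _, .nil, hl => absurd hl (by simp)

theorem zipWalk_length : ∀ {u v : V₁} {a b : V₂} (p : G₁.Walk u v) (r : G₂.Walk a b)
    (hl : p.length = r.length), (zipWalk p r hl).length = p.length
  | _, _, _, _, .nil, .nil, _ => rfl
  | _, _, _, _, .cons h p, .cons h' r, hl => by
      simp only [zipWalk]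
      exact congrArg (· + 1) (zipWalk_length p r (by simpa using hl))
  | _, _, _, _, .nil, .cons _ _, hl => absurd hl (by simp)
  | _, _, _, _, .cons _ _, .nil, hl => absurd hl (by simp)

theorem zipWalk_sign (σ₁ : V₁ → V₁ → ℤ) (σ₂ : V₂ → V₂ → ℤ) :
    ∀ {u v : V₁} {a b : V₂} (p : G₁.Walk u v) (r : G₂.Walk a b)
    (hl : p.length = r.length),
    walkSign (tensorSign σ₁ σ₂) (zipWalk p r hl) = walkSign σ₁ p * walkSign σ₂ r
  | _, _, _, _, .nil, .nil, _ => by simp [zipWalk, walkSign]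
  | _, _, _, _, .cons h p, .cons h' r, hl => by
      simp only [zipWalk, walkSign, zipWalk_sign σ₁ σ₂ p r (by simpa using hl)]
      unfold tensorSign
      ring
  | _, _, _, _, .nil, .cons _ _, hl => absurd hl (by simp)
  | _, _, _, _, .cons _ _, .nil, hl => absurd hl (by simp)

theorem walkSign_pm {V : Type*} {G : SimpleGraph V} {σ : V → V → ℤ}
    (hσ : ∀ u v : V, G.Adj u v → σ u v = 1 ∨ σ u v = -1) :
    ∀ {u v : V} (p : G.Walk u v), walkSign σ p = 1 ∨ walkSign σ p = -1
  | _, _, .nil => Or.inl rfl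
  | _, _, .cons h p => by
      rcases hσ _ _ h with h1 | h1 <;> rcases walkSign_pm hσ p with h2 | h2 <;>
        simp [walkSign, h1, h2]

theorem walkSign_ne_zero {V : Type*} {G : SimpleGraph V} {σ : V → V → ℤ}
    (hσ : ∀ u v : V, G.Adj u v → σ u v = 1 ∨ σ u v = -1)
    {u v : V} (p : G.Walk u v) : walkSign σ p ≠ 0 := by
  rcases walkSign_pm hσ p with h | h <;> simp [h]

theorem exists_walk_length {V : Type*} {G : SimpleGraph V} {w w' : V}
    (h : G.Adj w w') (n : ℕ) : ∃ b, ∃ r : G.Walk w b, r.length = n := by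
  have aux : ∀ n : ℕ, ∃ b, (b = w ∨ b = w') ∧ ∃ r : G.Walk b w, r.length = n := by
    intro n
    induction n with
    | zero => exact ⟨w, Or.inl rfl, .nil, rfl⟩
    | succ n ih =>
      obtain ⟨b, hb, r, hr⟩ := ih
      rcases hb with rfl | rfl
      · exact ⟨w', Or.inr rfl, .cons h.symm r, by simp [hr]⟩
      · exact ⟨w, Or.inl rfl, .cons h r, by simp [hr]⟩
  obtain ⟨b, _, r, hr⟩ := aux n
  exact ⟨b, r.reverse, by simp [hr]⟩

theorem walkSign_eq_one_of_length_zero {V : Type*} {G : SimpleGraph V} {σ : V → V → ℤ}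
    {u v : V} (p : G.Walk u v) (h : p.length = 0) : walkSign σ p = 1 := by
  cases p with
  | nil => rfl
  | cons _ _ => simp at h

theorem walk_eq_of_no_edge (hE : ∀ w w' : V₂, ¬G₂.Adj w w') {x y : V₁ × V₂}
    (W : (tensorProd G₁ G₂).Walk x y) : x = y := by
  cases W with
  | nil => rfl
  | cons h _ => exact absurd h.2 (hE _ _)

theorem walk_eq_of_no_edge' (hE : ∀ w w' : V₁, ¬G₁.Adj w w') {x y : V₁ × V₂}
    (W : (tensorProd G₁ G₂).Walk x y) : x = y := by
  cases W with
  | nil => rfl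
  | cons h _ => exact absurd h.1 (hE _ _)

theorem compat_left (hne : Nonempty V₂) (hconn : (tensorProd G₁ G₂).Connected)
    (σ₁ : V₁ → V₁ → ℤ) (σ₂ : V₂ → V₂ → ℤ)
    (hσ₂ : ∀ u v : V₂, G₂.Adj u v → σ₂ u v = 1 ∨ σ₂ u v = -1)
    (hc : Compatible (tensorProd G₁ G₂) (tensorSign σ₁ σ₂)) : Compatible G₁ σ₁ := by
  intro u v p q hp hq
  unfold IsShortest at hp hq
  by_cases hE : ∃ w w', G₂.Adj w w'
  · obtain ⟨w, w', hww⟩ := hE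
    obtain ⟨b, r, hr⟩ := exists_walk_length hww p.length
    have hqp : q.length = p.length := hq.trans hp.symm
    set P := zipWalk p r hr.symm with hP
    set Q := zipWalk q r (hqp.trans hr.symm) with hQ
    have hdist : (tensorProd G₁ G₂).dist (u, w) (v, b) = p.length := by
      apply le_antisymm
      · have := SimpleGraph.dist_le P
        rwa [hP, zipWalk_length] at this
      · have hreach : (tensorProd G₁ G₂).Reachable (u, w) (v, b) := ⟨P⟩
        obtain ⟨W, hW⟩ := hreach.exists_walk_length_eq_dist
        have h1 : G₁.dist u v ≤ (W.map fstHom).length := SimpleGraph.dist_le _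
        rw [SimpleGraph.Walk.length_map, hW] at h1
        exact hp ▸ h1
    have hPs : IsShortest P := by
      unfold IsShortest; rw [hP, zipWalk_length, hdist]
    have hQs : IsShortest Q := by
      unfold IsShortest; rw [hQ, zipWalk_length, hdist, hqp]
    have := hc _ _ P Q hPs hQs
    rw [hP, hQ, zipWalk_sign, zipWalk_sign] at this
    exact mul_right_cancel₀ (walkSign_ne_zero hσ₂ r) this
  · push_neg at hE
    obtain ⟨a⟩ := hne
    obtain ⟨W⟩ := hconn.preconnected (u, a) (v, a)
    have huv : u = v := congrArg Prod.fst (walk_eq_of_no_edge hE W)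
    subst huv
    rw [SimpleGraph.dist_self] at hp hq
    rw [walkSign_eq_one_of_length_zero p hp, walkSign_eq_one_of_length_zero q hq]

theorem compat_right (hne : Nonempty V₁) (hconn : (tensorProd G₁ G₂).Connected)
    (σ₁ : V₁ → V₁ → ℤ) (σ₂ : V₂ → V₂ → ℤ)
    (hσ₁ : ∀ u v : V₁, G₁.Adj u v → σ₁ u v = 1 ∨ σ₁ u v = -1)
    (hc : Compatible (tensorProd G₁ G₂) (tensorSign σ₁ σ₂)) : Compatible G₂ σ₂ := by
  intro u v p q hp hq
  unfold IsShortest at hp hq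
  by_cases hE : ∃ w w', G₁.Adj w w'
  · obtain ⟨w, w', hww⟩ := hE
    obtain ⟨b, r, hr⟩ := exists_walk_length hww p.length
    have hqp : q.length = p.length := hq.trans hp.symm
    set P := zipWalk r p hr with hP
    set Q := zipWalk r q (hr.trans hqp.symm) with hQ
    have hdist : (tensorProd G₁ G₂).dist (w, u) (b, v) = p.length := by
      apply le_antisymm
      · have := SimpleGraph.dist_le P
        rwa [hP, zipWalk_length, hr] at this
      · have hreach : (tensorProd G₁ G₂).Reachable (w, u) (b, v) := ⟨P⟩
        obtain ⟨W, hW⟩ := hreach.exists_walk_length_eq_dist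
        have h1 : G₂.dist u v ≤ (W.map sndHom).length := SimpleGraph.dist_le _
        rw [SimpleGraph.Walk.length_map, hW] at h1
        exact hp ▸ h1
    have hPs : IsShortest P := by
      unfold IsShortest; rw [hP, zipWalk_length, hr, hdist]
    have hQs : IsShortest Q := by
      unfold IsShortest; rw [hQ, zipWalk_length, hr, hdist]
    have := hc _ _ P Q hPs hQs
    rw [hP, hQ, zipWalk_sign, zipWalk_sign] at this
    exact mul_left_cancel₀ (walkSign_ne_zero hσ₁ r) this
  · push_neg at hE
    obtain ⟨a⟩ := hne
    obtain ⟨W⟩ := hconn.preconnected (a, u) (a, v)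
    have huv : u = v := congrArg Prod.snd (walk_eq_of_no_edge' hE W)
    subst huv
    rw [SimpleGraph.dist_self] at hp hq
    rw [walkSign_eq_one_of_length_zero p hp, walkSign_eq_one_of_length_zero q hq]

end Aux

/-- For connected signed graphs `Σ₁`, `Σ₂` whose tensor product is connected:
if `Σ₁ ⊗ Σ₂` is compatible, then both `Σ₁` and `Σ₂` are compatible. -/
theorem tensorProd_compatible {V₁ V₂ : Type*}
    (G₁ : SimpleGraph V₁) (G₂ : SimpleGraph V₂)
    (h₁ : G₁.Connected) (h₂ : G₂.Connected)
    (hconn : (tensorProd G₁ G₂).Connected)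
    (σ₁ : V₁ → V₁ → ℤ) (σ₂ : V₂ → V₂ → ℤ)
    (hσ₁ : ∀ u v : V₁, G₁.Adj u v → σ₁ u v = 1 ∨ σ₁ u v = -1)
    (hσ₂ : ∀ u v : V₂, G₂.Adj u v → σ₂ u v = 1 ∨ σ₂ u v = -1)
    (hsymm₁ : ∀ u v : V₁, σ₁ u v = σ₁ v u) (hsymm₂ : ∀ u v : V₂, σ₂ u v = σ₂ v u)
    (hc : Compatible (tensorProd G₁ G₂) (tensorSign σ₁ σ₂)) :
    Compatible G₁ σ₁ ∧ Compatible G₂ σ₂ :=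
  ⟨compat_left h₂.nonempty hconn σ₁ σ₂ hσ₂ hc,
   compat_right h₁.nonempty hconn σ₁ σ₂ hσ₁ hc⟩
end

section
/- If u and v are an incompatible pair of vertices in a signed graph Σ₁ at distance k, and vv' is any edge in a signed graph Σ₂ such that the tensor product Σ₁ ⊗ Σ₂ is connected, then (u, v) paired appropriately yields an incompatible pair in Σ₁ ⊗ Σ₂ at distance k: when k is even, ((u₀,w),(u_k,w)) is incompatible; when k is odd, ((u₀,w),(u_k,w')) is incompatible, where ww' is an edge of Σ₂ and u₀, u_k denote u and v. -/
open SimpleGraph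

section Aux

variable {V₁ V₂ : Type*} {G₁ : SimpleGraph V₁} {G₂ : SimpleGraph V₂}

lemma walkSign_copy {V : Type*} {G : SimpleGraph V} (σ : V → V → ℤ) {u v u' v' : V}
    (p : G.Walk u v) (h : u = u') (h' : v = v') :
    walkSign σ (p.copy h h') = walkSign σ p := by subst h; subst h'; rfl

def projWalk : ∀ {x y : V₁ × V₂}, (tensorProd G₁ G₂).Walk x y → G₁.Walk x.1 y.1
  | _, _, SimpleGraph.Walk.nil => SimpleGraph.Walk.nil
  | _, _, SimpleGraph.Walk.cons h p => SimpleGraph.Walk.cons h.1 (projWalk p)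

lemma projWalk_length : ∀ {x y : V₁ × V₂} (p : (tensorProd G₁ G₂).Walk x y),
    (projWalk p).length = p.length
  | _, _, SimpleGraph.Walk.nil => rfl
  | _, _, SimpleGraph.Walk.cons h p => by
      simp [projWalk, projWalk_length p]

def liftWalk : ∀ {u v : V₁} (p : G₁.Walk u v) (w w' : V₂), G₂.Adj w w' →
    (tensorProd G₁ G₂).Walk (u, w) (v, if Even p.length then w else w')
  | _, _, SimpleGraph.Walk.nil, w, w', _ => SimpleGraph.Walk.nil.copy rfl (by simp)
  | _, _, SimpleGraph.Walk.cons h p, w, w', hadj =>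
      (SimpleGraph.Walk.cons (show (tensorProd G₁ G₂).Adj (_, w) (_, w') from ⟨h, hadj⟩)
        (liftWalk p w' w hadj.symm)).copy rfl (by
          rcases Nat.even_or_odd p.length with he | ho
          · simp [Nat.even_add_one, he]
          · simp [Nat.even_add_one, Nat.not_even_iff_odd.mpr ho])

lemma liftWalk_length : ∀ {u v : V₁} (p : G₁.Walk u v) (w w' : V₂) (h : G₂.Adj w w'),
    (liftWalk p w w' h).length = p.length
  | _, _, SimpleGraph.Walk.nil, w, w', _ => by simp [liftWalk]
  | _, _, SimpleGraph.Walk.cons h p, w, w', hadj => by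
      rw [liftWalk, SimpleGraph.Walk.length_copy]
      simp [liftWalk, liftWalk_length p w' w hadj.symm]

lemma liftWalk_sign (σ₁ : V₁ → V₁ → ℤ) (σ₂ : V₂ → V₂ → ℤ)
    (hsymm₂ : ∀ u v : V₂, σ₂ u v = σ₂ v u) :
    ∀ {u v : V₁} (p : G₁.Walk u v) (w w' : V₂) (h : G₂.Adj w w'),
    walkSign (tensorSign σ₁ σ₂) (liftWalk p w w' h) = walkSign σ₁ p * (σ₂ w w') ^ p.length
  | _, _, SimpleGraph.Walk.nil, w, w', _ => by
      simp [liftWalk, walkSign_copy, walkSign]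
  | _, _, SimpleGraph.Walk.cons h p, w, w', hadj => by
      rw [liftWalk, walkSign_copy]
      show tensorSign σ₁ σ₂ (_, w) (_, w') * _ = _
      rw [liftWalk_sign σ₁ σ₂ hsymm₂ p w' w hadj.symm, hsymm₂ w' w]
      simp only [tensorSign, walkSign, SimpleGraph.Walk.length_cons, pow_succ]
      ring

end Aux

/-- An incompatible pair `(u₀,u_k)` at distance `k` in `Σ₁` lifts, via any edge `ww'`
of `Σ₂`, to an incompatible pair at distance `k` in the connected tensor product
`Σ₁ ⊗ Σ₂`: namely `((u₀,w),(u_k,w))` when `k` is even, and `((u₀,w),(u_k,w'))`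
when `k` is odd. -/
theorem tensorProd_incompatible_lift {V₁ V₂ : Type*}
    (G₁ : SimpleGraph V₁) (G₂ : SimpleGraph V₂)
    (h₁ : G₁.Connected) (h₂ : G₂.Connected)
    (hconn : (tensorProd G₁ G₂).Connected)
    (σ₁ : V₁ → V₁ → ℤ) (σ₂ : V₂ → V₂ → ℤ)
    (hσ₁ : ∀ u v : V₁, G₁.Adj u v → σ₁ u v = 1 ∨ σ₁ u v = -1)
    (hσ₂ : ∀ u v : V₂, G₂.Adj u v → σ₂ u v = 1 ∨ σ₂ u v = -1)
    (hsymm₁ : ∀ u v : V₁, σ₁ u v = σ₁ v u) (hsymm₂ : ∀ u v : V₂, σ₂ u v = σ₂ v u)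
    (u₀ uk : V₁) (k : ℕ) (hk : G₁.dist u₀ uk = k)
    (hincomp : ¬ PairCompatible G₁ σ₁ u₀ uk)
    (w w' : V₂) (hww' : G₂.Adj w w') :
    (Even k →
      (tensorProd G₁ G₂).dist (u₀, w) (uk, w) = k ∧
        ¬ PairCompatible (tensorProd G₁ G₂) (tensorSign σ₁ σ₂) (u₀, w) (uk, w)) ∧
    (Odd k →
      (tensorProd G₁ G₂).dist (u₀, w) (uk, w') = k ∧
        ¬ PairCompatible (tensorProd G₁ G₂) (tensorSign σ₁ σ₂) (u₀, w) (uk, w')) := by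
  obtain ⟨p, q, hp, hq, hpq⟩ : ∃ p q : G₁.Walk u₀ uk, IsShortest p ∧ IsShortest q ∧
      walkSign σ₁ p ≠ walkSign σ₁ q := by
    by_contra hc
    push_neg at hc
    exact hincomp fun p q hp hq => hc p q hp hq
  have hplen : p.length = k := hp.trans hk
  have hqlen : q.length = k := hq.trans hk
  have hs : σ₂ w w' = 1 ∨ σ₂ w w' = -1 := hσ₂ w w' hww'
  have hsne : (σ₂ w w') ^ k ≠ 0 := by
    rcases hs with h | h <;> simp [h]
  have hlow : ∀ (x : V₂), G₁.dist u₀ uk ≤ (tensorProd G₁ G₂).dist (u₀, w) (uk, x) := by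
    intro x
    obtain ⟨r, hr⟩ := (hconn (u₀, w) (uk, x)).exists_walk_length_eq_dist
    calc G₁.dist u₀ uk ≤ (projWalk r).length := SimpleGraph.dist_le _
      _ = r.length := projWalk_length r
      _ = _ := hr
  have key : (tensorProd G₁ G₂).dist (u₀, w) (uk, if Even k then w else w') = k ∧
      ¬ PairCompatible (tensorProd G₁ G₂) (tensorSign σ₁ σ₂) (u₀, w)
        (uk, if Even k then w else w') := by
    set z : V₂ := if Even k then w else w' with hz
    have hcopy : ∀ (r : G₁.Walk u₀ uk), r.length = k →
        ∃ r' : (tensorProd G₁ G₂).Walk (u₀, w) (uk, z),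
          r'.length = k ∧ walkSign (tensorSign σ₁ σ₂) r' = walkSign σ₁ r * (σ₂ w w') ^ k := by
      intro r hr
      refine ⟨(liftWalk r w w' hww').copy rfl (by rw [hz, ← hr]), ?_, ?_⟩
      · rw [SimpleGraph.Walk.length_copy, liftWalk_length, hr]
      · rw [walkSign_copy, liftWalk_sign σ₁ σ₂ hsymm₂, hr]
    obtain ⟨p', hp'len, hp'sign⟩ := hcopy p hplen
    obtain ⟨q', hq'len, hq'sign⟩ := hcopy q hqlen
    have hdist : (tensorProd G₁ G₂).dist (u₀, w) (uk, z) = k := by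
      apply le_antisymm
      · rw [← hp'len]; exact SimpleGraph.dist_le p'
      · rw [← hk]; exact hlow z
    refine ⟨hdist, fun hcomp => hpq ?_⟩
    have := hcomp p' q' (by rw [IsShortest, hp'len, hdist]) (by rw [IsShortest, hq'len, hdist])
    rw [hp'sign, hq'sign] at this
    exact mul_right_cancel₀ hsne this
  constructor
  · intro hke
    rw [if_pos hke] at key
    exact key
  · intro hko
    rw [if_neg (Nat.not_even_iff_odd.mpr hko)] at key
    exact key
end
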